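/- For every σ > 1, σ^{−1/2} · ( 1 + √(σ − 1) · arccos(σ^{−1/2}) ) < π/2, and σ^{−1/2} · ( 1 + √(σ − 1) · arccos(σ^{−1/2}) ) → π/2 as σ → +∞. -/

import Mathlib

open Real Filter

lemma key_mono : StrictMonoOn (fun θ : ℝ => Real.cos θ + θ * Real.sin θ) (Set.Icc 0 (π/2)) := by
  apply strictMonoOn_of_deriv_pos (convex_Icc _ _)
  · fun_prop
  · intro t ht
    rw [interior_Icc, Set.mem_Ioo] at ht
    have h : HasDerivAt (fun θ : ℝ => Real.cos θ + θ * Real.sin θ) (t * Real.cos t) t := by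
      have := (Real.hasDerivAt_cos t).add ((hasDerivAt_id t).mul (Real.hasDerivAt_sin t))
      refine this.congr_deriv ?_
      simp only [id_eq]
      ring
    rw [h.deriv]
    have hc : 0 < Real.cos t := Real.cos_pos_of_mem_Ioo
      ⟨by linarith [Real.pi_pos], ht.2⟩
    exact mul_pos ht.1 hc

lemma key (θ : ℝ) (h0 : 0 ≤ θ) (h1 : θ < π/2) : Real.cos θ + θ * Real.sin θ < π/2 := by
  have := key_mono (Set.mem_Icc.2 ⟨h0, h1.le⟩)
      (Set.mem_Icc.2 ⟨by positivity, le_refl _⟩) h1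
  simpa [Real.cos_pi_div_two, Real.sin_pi_div_two] using this

lemma aux_eq (σ : ℝ) (hσ : 1 < σ) :
    σ ^ (-(1 : ℝ) / 2) * (1 + Real.sqrt (σ - 1) * Real.arccos (σ ^ (-(1 : ℝ) / 2))) =
      σ ^ (-(1 : ℝ) / 2) + Real.sqrt (1 - (σ ^ (-(1 : ℝ) / 2))^2)
        * Real.arccos (σ ^ (-(1 : ℝ) / 2)) := by
  have hσ0 : (0:ℝ) < σ := by linarith
  set x := σ ^ (-(1 : ℝ) / 2) with hx
  have hx0 : 0 < x := Real.rpow_pos_of_pos hσ0 _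
  have hx2 : x ^ 2 = σ⁻¹ := by
    rw [hx, ← Real.rpow_natCast (σ ^ (-(1:ℝ)/2)) 2, ← Real.rpow_mul hσ0.le]
    norm_num [Real.rpow_neg_one]
  have hkey : x * Real.sqrt (σ - 1) = Real.sqrt (1 - x ^ 2) := by
    rw [← Real.sqrt_sq hx0.le, ← Real.sqrt_mul (sq_nonneg x)]
    congr 1
    rw [hx2]
    field_simp
    rw [Real.sq_sqrt (by positivity), mul_sub, mul_one, mul_one_div_cancel hσ0.ne']
  rw [← hkey]
  ring

theorem radiation_fermi_speed_bound :
    (∀ σ : ℝ, 1 < σ →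
      σ ^ (-(1 : ℝ) / 2) * (1 + Real.sqrt (σ - 1) * Real.arccos (σ ^ (-(1 : ℝ) / 2))) < π / 2) ∧
    Tendsto (fun σ : ℝ =>
        σ ^ (-(1 : ℝ) / 2) * (1 + Real.sqrt (σ - 1) * Real.arccos (σ ^ (-(1 : ℝ) / 2))))
      atTop (nhds (π / 2)) := by
  have hg : Continuous (fun x : ℝ => x + Real.sqrt (1 - x^2) * Real.arccos x) := by
    continuity
  constructor
  · intro σ hσ
    rw [aux_eq σ hσ]
    set x := σ ^ (-(1 : ℝ) / 2) with hxdef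
    have hσ0 : (0:ℝ) < σ := by linarith
    have hx0 : 0 < x := Real.rpow_pos_of_pos hσ0 _
    have hx1 : x < 1 := by
      rw [hxdef]
      calc σ ^ (-(1:ℝ)/2) < σ ^ (0:ℝ) := by
            apply Real.rpow_lt_rpow_left_iff hσ |>.2
            norm_num
        _ = 1 := Real.rpow_zero σ
    have hcos : Real.cos (Real.arccos x) = x := Real.cos_arccos (by linarith) hx1.le
    have hsin : Real.sin (Real.arccos x) = Real.sqrt (1 - x^2) := Real.sin_arccos x
    have h0 : 0 ≤ Real.arccos x := Real.arccos_nonneg x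
    have h1 : Real.arccos x < π/2 := by
      have := Real.arccos_lt_pi_div_two (x := x)
      exact this.2 hx0
    have := key (Real.arccos x) h0 h1
    rw [hcos, hsin] at this
    linarith
  · have h2 : Tendsto (fun σ : ℝ => σ ^ (-(1:ℝ)/2)) atTop (nhds 0) := by
      have : -(1:ℝ)/2 < 0 := by norm_num
      simpa using tendsto_rpow_neg_atTop (y := (1:ℝ)/2) (by norm_num) |>.congr (fun σ => by
        rw [neg_div])
    have hcomp : Tendsto (fun σ : ℝ => (fun x : ℝ => x + Real.sqrt (1 - x^2) * Real.arccos x)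
        (σ ^ (-(1:ℝ)/2))) atTop (nhds ((0:ℝ) + Real.sqrt (1 - 0^2) * Real.arccos 0)) :=
      (hg.tendsto 0).comp h2
    have hval : (0:ℝ) + Real.sqrt (1 - 0^2) * Real.arccos 0 = π/2 := by
      simp [Real.arccos_zero]
    rw [hval] at hcomp
    apply hcomp.congr'
    filter_upwards [eventually_gt_atTop (1:ℝ)] with σ hσ
    exact (aux_eq σ hσ).symm
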